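/- Let D be a connected locally semicomplete digraph in which no maximal weak hub is mixed. If X and Y are two distinct maximal weak hubs of D, then X ∩ Y = ∅. -/

import Mathlib

/-- `A` is the arc relation of an oriented graph: no loops and no digons. -/
def IsOriented {V : Type*} (A : V → V → Prop) : Prop :=
  Irreflexive A ∧ ∀ x y, A x y → ¬ A y x

/-- `D` is strong: a directed path between each ordered pair of vertices. -/
def IsStrong {V : Type*} (A : V → V → Prop) : Prop :=
  ∀ x y : V, Relation.ReflTransGen A x y

/-- The set `S` induces a strong subdigraph (all paths staying inside `S`). -/
def StrongOn {V : Type*} (A : V → V → Prop) (S : Set V) : Prop :=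
  ∀ x ∈ S, ∀ y ∈ S, Relation.ReflTransGen (fun a b => a ∈ S ∧ b ∈ S ∧ A a b) x y

/-- The set `S` induces a tournament. -/
def TournamentOn {V : Type*} (A : V → V → Prop) (S : Set V) : Prop :=
  ∀ x ∈ S, ∀ y ∈ S, x ≠ y → A x y ∨ A y x

/-- The set `S` induces an acyclic digraph. -/
def AcyclicOn {V : Type*} (A : V → V → Prop) (S : Set V) : Prop :=
  ∀ x : V, ¬ Relation.TransGen (fun a b => a ∈ S ∧ b ∈ S ∧ A a b) x x

/-- The set `S` induces a semicomplete digraph. -/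
def SemicompleteOn {V : Type*} (A : V → V → Prop) (S : Set V) : Prop :=
  ∀ x ∈ S, ∀ y ∈ S, x ≠ y → A x y ∨ A y x

/-- `z` lies strictly inside the cyclic interval `]x,y[` for the cyclic order `σ`. -/
def CycBtw {V : Type*} [Fintype V] (σ : V ≃ Fin (Fintype.card V)) (x z y : V) : Prop :=
  0 < (σ z - σ x).val ∧ (σ z - σ x).val < (σ y - σ x).val

/-- In-round: a cyclic order such that for every arc `xy` and `z ∈ ]x,y[`, `zy` is an arc. -/
def InRound {V : Type*} [Fintype V] (A : V → V → Prop) : Prop :=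
  ∃ σ : V ≃ Fin (Fintype.card V), ∀ x y z : V, A x y → CycBtw σ x z y → A z y

/-- Out-round: a cyclic order such that for every arc `xy` and `z ∈ ]x,y[`, `xz` is an arc. -/
def OutRound {V : Type*} [Fintype V] (A : V → V → Prop) : Prop :=
  ∃ σ : V ≃ Fin (Fintype.card V), ∀ x y z : V, A x y → CycBtw σ x z y → A x z

/-- Every out-neighbourhood induces a transitive tournament. -/
def LocallyOutTransitive {V : Type*} (A : V → V → Prop) : Prop :=
  ∀ x : V, TournamentOn A {y | A x y} ∧ AcyclicOn A {y | A x y}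

/-- A hub: a nonempty set inducing a strong subdigraph, all of whose vertices are
in-neighbours of some vertex outside of it. -/
def Hub {V : Type*} (A : V → V → Prop) (H : Set V) : Prop :=
  H.Nonempty ∧ StrongOn A H ∧ ∃ x ∉ H, ∀ h ∈ H, A h x

/-- Locally semicomplete digraph: no loops, and every out- and in-neighbourhood
induces a semicomplete digraph (digons are allowed). -/
def LocallySemicomplete {V : Type*} (A : V → V → Prop) : Prop :=
  Irreflexive A ∧ (∀ x : V, SemicompleteOn A {y | A x y}) ∧
    ∀ x : V, SemicompleteOn A {y | A y x}

/-- The underlying undirected graph is connected. -/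
def ConnectedDigraph {V : Type*} (A : V → V → Prop) : Prop :=
  ∀ x y : V, Relation.ReflTransGen (fun a b => A a b ∨ A b a) x y

/-- A weak hub: a nonempty set inducing a strong subdigraph that is strictly
in-dominated or strictly out-dominated by some vertex outside of it. -/
def WeakHub {V : Type*} (A : V → V → Prop) (X : Set V) : Prop :=
  X.Nonempty ∧ StrongOn A X ∧
    ∃ x ∉ X, (∀ u ∈ X, A u x ∧ ¬ A x u) ∨ ∀ u ∈ X, A x u ∧ ¬ A u x

/-- A set `X` is mixed if some outside vertex has both an out-neighbour and an
in-neighbour in `X`. -/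
def MixedSet {V : Type*} (A : V → V → Prop) (X : Set V) : Prop :=
  ∃ x ∉ X, (∃ u ∈ X, A x u) ∧ ∃ v ∈ X, A v x

/-- `X` is an inclusion-wise maximal weak hub. -/
def MaxWeakHub {V : Type*} (A : V → V → Prop) (X : Set V) : Prop :=
  WeakHub A X ∧ ∀ Y : Set V, WeakHub A Y → X ⊆ Y → Y = X

lemma strongOn_union_aux {V : Type*} {A : V → V → Prop} {X Y : Set V} {z : V}
    (hX : StrongOn A X) (hY : StrongOn A Y) (hzX : z ∈ X) (hzY : z ∈ Y) :
    StrongOn A (X ∪ Y) := by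
  have liftX : ∀ {a b : V}, Relation.ReflTransGen (fun a b => a ∈ X ∧ b ∈ X ∧ A a b) a b →
      Relation.ReflTransGen (fun a b => a ∈ X ∪ Y ∧ b ∈ X ∪ Y ∧ A a b) a b :=
    fun h => Relation.ReflTransGen.mono (p := fun a b => a ∈ X ∪ Y ∧ b ∈ X ∪ Y ∧ A a b)
      (fun a b (hab : a ∈ X ∧ b ∈ X ∧ A a b) => ⟨Or.inl hab.1, Or.inl hab.2.1, hab.2.2⟩) _ _ h
  have liftY : ∀ {a b : V}, Relation.ReflTransGen (fun a b => a ∈ Y ∧ b ∈ Y ∧ A a b) a b →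
      Relation.ReflTransGen (fun a b => a ∈ X ∪ Y ∧ b ∈ X ∪ Y ∧ A a b) a b :=
    fun h => Relation.ReflTransGen.mono (p := fun a b => a ∈ X ∪ Y ∧ b ∈ X ∪ Y ∧ A a b)
      (fun a b (hab : a ∈ Y ∧ b ∈ Y ∧ A a b) => ⟨Or.inr hab.1, Or.inr hab.2.1, hab.2.2⟩) _ _ h
  rintro p (hp | hp) q (hq | hq)
  · exact liftX (hX p hp q hq)
  · exact (liftX (hX p hp z hzX)).trans (liftY (hY z hzY q hq))
  · exact (liftY (hY p hp z hzY)).trans (liftX (hX z hzX q hq))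
  · exact liftY (hY p hp q hq)

theorem stmt14 {V : Type*} [Fintype V] (A : V → V → Prop)
    (hls : LocallySemicomplete A) (hconn : ConnectedDigraph A)
    (hnomix : ∀ Z : Set V, MaxWeakHub A Z → ¬ MixedSet A Z)
    (X Y : Set V) (hX : MaxWeakHub A X) (hY : MaxWeakHub A Y) (hne : X ≠ Y) :
    X ∩ Y = ∅ := by
  rw [Set.eq_empty_iff_forall_notMem]
  rintro z ⟨hzX, hzY⟩
  obtain ⟨hXne, hXstrong, x, hxX, hx⟩ := hX.1
  obtain ⟨hYne, hYstrong, -⟩ := hY.1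
  have hYnomix := hnomix Y hY
  by_cases hxY : x ∈ Y
  · -- x ∈ Y : show X ⊆ Y, contradicting maximality of X together with X ≠ Y
    have hsub : X ⊆ Y := by
      intro u huX
      rcases hx with hsink | hsource
      · have hpath := hXstrong z hzX u huX
        clear huX
        induction hpath with
        | refl => exact hzY
        | tail hzb hbc ih =>
          by_contra hc
          exact hYnomix ⟨_, hc, ⟨x, hxY, (hsink _ hbc.2.1).1⟩, ⟨_, ih, hbc.2.2⟩⟩
      · have hpath := hXstrong u huX z hzX
        clear huX
        induction hpath using Relation.ReflTransGen.head_induction_on with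
        | refl => exact hzY
        | head hac htail ih =>
          by_contra ha
          exact hYnomix ⟨_, ha, ⟨_, ih, hac.2.2⟩, ⟨x, hxY, (hsource _ hac.1).1⟩⟩
    exact hne (hX.2 Y hY.1 hsub).symm
  · -- x ∉ Y : x strictly dominates X ∪ Y, so X ∪ Y is a weak hub
    have hxXY : x ∉ X ∪ Y := by rintro (h | h); exacts [hxX h, hxY h]
    have hdom : (∀ u ∈ X ∪ Y, A u x ∧ ¬ A x u) ∨ ∀ u ∈ X ∪ Y, A x u ∧ ¬ A u x := by
      rcases hx with hsink | hsource
      · left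
        have hxnoout : ∀ v ∈ Y, ¬ A x v := fun v hv h =>
          hYnomix ⟨x, hxY, ⟨v, hv, h⟩, ⟨z, hzY, (hsink z hzX).1⟩⟩
        have hdomY : ∀ v ∈ Y, A v x := by
          intro v hv
          have hpath := hYstrong z hzY v hv
          clear hv
          induction hpath with
          | refl => exact (hsink z hzX).1
          | tail hzb hbc ih =>
            have hne' : _ ≠ x := fun h => hxY (h ▸ hbc.2.1)
            rcases (hls.2.1 _) _ hbc.2.2 x ih hne' with h | h
            · exact h
            · exact absurd h (hxnoout _ hbc.2.1)
        rintro u (hu | hu)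
        · exact hsink u hu
        · exact ⟨hdomY u hu, hxnoout u hu⟩
      · right
        have hxnoin : ∀ v ∈ Y, ¬ A v x := fun v hv h =>
          hYnomix ⟨x, hxY, ⟨z, hzY, (hsource z hzX).1⟩, ⟨v, hv, h⟩⟩
        have hdomY : ∀ v ∈ Y, A x v := by
          intro v hv
          have hpath := hYstrong v hv z hzY
          clear hv
          induction hpath using Relation.ReflTransGen.head_induction_on with
          | refl => exact (hsource z hzX).1
          | head hac htail ih =>
            have hne' : _ ≠ x := fun h => hxY (h ▸ hac.1)
            rcases (hls.2.2 _) _ hac.2.2 x ih hne' with h | h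
            · exact absurd h (hxnoin _ hac.1)
            · exact h
        rintro u (hu | hu)
        · exact hsource u hu
        · exact ⟨hdomY u hu, hxnoin u hu⟩
    have hWH : WeakHub A (X ∪ Y) :=
      ⟨⟨z, Or.inl hzX⟩, strongOn_union_aux hXstrong hYstrong hzX hzY, x, hxXY, hdom⟩
    have h1 := hX.2 (X ∪ Y) hWH Set.subset_union_left
    have h2 := hY.2 (X ∪ Y) hWH Set.subset_union_right
    exact hne (h1.symm.trans h2)
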